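/- (Sewing lemma / existence of Λ) Let z > 1 and let A: ℝ³ → ℝ be continuous, vanishing when all arguments coincide, lying in the image of N, and satisfying |A_{sut}| ≤ M |u-s|^ρ |t-u|^{z-ρ} for some 0 < ρ < z. Then there exists a unique R ∈ ΩC^z with NR = A, and ‖R‖_z ≤ M/(2^z - 2). -/

import Mathlib

open Finset

noncomputable def sewU (P : ℝ → ℝ → ℝ) (n : ℕ) (x h : ℝ) : ℝ :=
  ∑ i ∈ Finset.range n, P (x + (i : ℝ) * h) (x + ((i : ℝ) + 1) * h)

noncomputable def sewT (P : ℝ → ℝ → ℝ) (n : ℕ) (s t : ℝ) : ℝ :=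
  sewU P n s ((t - s) / n)

lemma sewU_add (P : ℝ → ℝ → ℝ) (n m : ℕ) (x h : ℝ) :
    sewU P (n + m) x h = sewU P n x h + sewU P m (x + n * h) h := by
  unfold sewU
  rw [Finset.sum_range_add]
  congr 1
  refine Finset.sum_congr rfl fun i _ => ?_
  push_cast
  ring_nf

lemma sewU_mul (P : ℝ → ℝ → ℝ) (n m : ℕ) (x h : ℝ) :
    sewU P (n * m) x h = ∑ a ∈ Finset.range n, sewU P m (x + (a : ℝ) * ((m : ℝ) * h)) h := by
  induction n with
  | zero => simp [sewU]
  | succ n ih =>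
    rw [Nat.succ_mul, sewU_add, ih, Finset.sum_range_succ]
    congr 2
    · push_cast; ring

lemma sewU_eq_sewT (P : ℝ → ℝ → ℝ) (n : ℕ) (hn : n ≠ 0) (s h t : ℝ) (ht : s + n * h = t) :
    sewU P n s h = sewT P n s t := by
  unfold sewT
  have : (t - s) / n = h := by
    have hn' : (n : ℝ) ≠ 0 := Nat.cast_ne_zero.2 hn
    field_simp [← ht]
    linarith
  rw [this]

lemma sewT_one (P : ℝ → ℝ → ℝ) (s t : ℝ) : sewT P 1 s t = P s t := by
  unfold sewT sewU
  rw [Finset.sum_range_one]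
  norm_num

lemma sewT_self (P : ℝ → ℝ → ℝ) (hPd : ∀ a, P a a = 0) (n : ℕ) (s : ℝ) :
    sewT P n s s = 0 := by
  unfold sewT sewU
  simp [hPd]

lemma sewT_split (P : ℝ → ℝ → ℝ) (n m : ℕ) (hn : n ≠ 0) (hm : m ≠ 0) (s t : ℝ) :
    sewT P (n + m) s t =
      sewT P n s (s + ((n : ℝ) / ((n : ℝ) + (m : ℝ))) * (t - s)) +
      sewT P m (s + ((n : ℝ) / ((n : ℝ) + (m : ℝ))) * (t - s)) t := by
  have hn' : (0 : ℝ) < (n : ℝ) := by exact_mod_cast Nat.pos_of_ne_zero hn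
  have hm' : (0 : ℝ) < (m : ℝ) := by exact_mod_cast Nat.pos_of_ne_zero hm
  have hN : ((n : ℝ) + (m : ℝ)) ≠ 0 := by positivity
  set u : ℝ := s + ((n : ℝ) / ((n : ℝ) + (m : ℝ))) * (t - s) with hu
  set h : ℝ := (t - s) / ((n : ℝ) + (m : ℝ)) with hh
  have e0 : sewT P (n + m) s t = sewU P (n + m) s h := by
    unfold sewT; congr 1; push_cast; rw [hh]
  rw [e0, sewU_add]
  have e1 : sewU P n s h = sewT P n s u := by
    refine sewU_eq_sewT P n hn s h u ?_
    rw [hu, hh]; field_simp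
  have e2 : s + (n : ℝ) * h = u := by
    rw [hu, hh]; field_simp
  have e3 : sewU P m u h = sewT P m u t := by
    refine sewU_eq_sewT P m hm u h t ?_
    rw [hu, hh]; field_simp; ring
  rw [e1, e2, e3]

noncomputable def sewLam (z : ℝ) : ℝ := ((2:ℝ)/3) ^ (z - 1)
noncomputable def sewK (z : ℝ) : ℝ := (1 - sewLam z)⁻¹

lemma sewLam_pos (z : ℝ) : 0 < sewLam z := Real.rpow_pos_of_pos (by norm_num) _

lemma sewLam_lt_one {z : ℝ} (hz : 1 < z) : sewLam z < 1 :=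
  Real.rpow_lt_one (by norm_num) (by norm_num) (by linarith)

lemma sewK_pos {z : ℝ} (hz : 1 < z) : 0 < sewK z :=
  inv_pos.2 (by linarith [sewLam_lt_one hz])

lemma sewK_mul {z : ℝ} (hz : 1 < z) : sewK z * (1 - sewLam z) = 1 :=
  inv_mul_cancel₀ (by linarith [sewLam_lt_one hz])

lemma sewT_sub_P (z M ρ : ℝ) (hz : 1 < z) (hρ0 : 0 < ρ) (hρz : ρ < z) (hM : 0 ≤ M)
    (A : ℝ → ℝ → ℝ → ℝ) (P : ℝ → ℝ → ℝ)
    (hP : ∀ s u t : ℝ, A s u t = P s t - P u t - P s u)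
    (hb : ∀ s u t : ℝ, |A s u t| ≤ M * |u - s| ^ ρ * |t - u| ^ (z - ρ)) :
    ∀ m : ℕ, m ≠ 0 → ∀ α β : ℝ, |sewT P m α β - P α β| ≤ sewK z * M * |β - α| ^ z := by
  intro m
  induction m using Nat.strong_induction_on with
  | _ m IH =>
  intro hm α β
  have hK : 0 < sewK z := sewK_pos hz
  rcases eq_or_ne m 1 with h1 | h1
  · subst h1
    rw [sewT_one]
    simp only [sub_self, abs_zero]
    exact mul_nonneg (mul_nonneg hK.le hM) (Real.rpow_nonneg (abs_nonneg _) z)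
  · -- m ≥ 2
    have hm2 : 2 ≤ m := by omega
    set j := m / 2 with hjdef
    set k := m - j with hkdef
    have hj : j ≠ 0 := by omega
    have hk : k ≠ 0 := by omega
    have hjm : j < m := by omega
    have hkm : k < m := by omega
    have hjk : j + k = m := by omega
    have h3j : m ≤ 3 * j := by omega
    have h2j : 2 * j ≤ m := by omega
    have hm' : (0:ℝ) < (m:ℝ) := by exact_mod_cast Nat.pos_of_ne_zero hm
    set x : ℝ := (j:ℝ) / (m:ℝ) with hxdef
    have hcast : (j:ℝ) + (k:ℝ) = (m:ℝ) := by exact_mod_cast hjk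
    set γ : ℝ := α + x * (β - α) with hγdef
    have hsplit : sewT P m α β = sewT P j α γ + sewT P k γ β := by
      have := sewT_split P j k hj hk α β
      rw [hjk] at this
      rw [this, hcast]
    have hx13 : 1/3 ≤ x := by
      rw [hxdef, le_div_iff₀ hm']
      have : (m:ℝ) ≤ 3 * (j:ℝ) := by exact_mod_cast h3j
      linarith
    have hx12 : x ≤ 1/2 := by
      rw [hxdef, div_le_iff₀ hm']
      have : 2 * (j:ℝ) ≤ (m:ℝ) := by exact_mod_cast h2j
      linarith
    have hx0 : (0:ℝ) ≤ x := by linarith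
    have hxpos : (0:ℝ) < x := by linarith
    have h1x0 : (0:ℝ) ≤ 1 - x := by linarith
    have h1xpos : (0:ℝ) < 1 - x := by linarith
    set d : ℝ := |β - α| with hddef
    have hd0 : (0:ℝ) ≤ d := abs_nonneg _
    have hγα : |γ - α| = x * d := by
      rw [hγdef, hddef]
      rw [show α + x * (β - α) - α = x * (β - α) by ring, abs_mul, abs_of_nonneg hx0]
    have hβγ : |β - γ| = (1 - x) * d := by
      rw [hγdef, hddef]
      rw [show β - (α + x * (β - α)) = (1 - x) * (β - α) by ring, abs_mul, abs_of_nonneg h1x0]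
    have hX := IH j hjm hj α γ
    have hY := IH k hkm hk γ β
    have hA : |A α γ β| ≤ M * (x * d) ^ ρ * ((1 - x) * d) ^ (z - ρ) := by
      have := hb α γ β
      rwa [hγα, hβγ] at this
    have heq : sewT P m α β - P α β =
        (sewT P j α γ - P α γ) + (sewT P k γ β - P γ β) + -(A α γ β) := by
      rw [hsplit, hP α γ β]; ring
    have habs : |sewT P m α β - P α β| ≤
        |sewT P j α γ - P α γ| + |sewT P k γ β - P γ β| + |A α γ β| := by
      rw [heq]
      calc |(sewT P j α γ - P α γ) + (sewT P k γ β - P γ β) + -(A α γ β)|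
          ≤ |sewT P j α γ - P α γ| + |sewT P k γ β - P γ β| + |-(A α γ β)| :=
            abs_add_three _ _ _
        _ = _ := by rw [abs_neg]
    -- scalar estimates
    set lam : ℝ := sewLam z with hlamdef
    have hlam1 : lam < 1 := sewLam_lt_one hz
    have hz1 : (0:ℝ) ≤ z - 1 := by linarith
    have hxz : x ^ z ≤ x * lam := by
      rw [show z = 1 + (z - 1) by ring, Real.rpow_add hxpos, Real.rpow_one]
      exact mul_le_mul_of_nonneg_left
        (Real.rpow_le_rpow hx0 (by linarith : x ≤ 2/3) hz1) hx0
    have h1xz : (1 - x) ^ z ≤ (1 - x) * lam := by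
      rw [show z = 1 + (z - 1) by ring, Real.rpow_add h1xpos, Real.rpow_one]
      exact mul_le_mul_of_nonneg_left
        (Real.rpow_le_rpow h1x0 (by linarith : 1 - x ≤ 2/3) hz1) h1x0
    have hAx : x ^ ρ * (1 - x) ^ (z - ρ) ≤ 1 := by
      have e1 : x ^ ρ ≤ 1 := Real.rpow_le_one hx0 (by linarith) hρ0.le
      have e2 : (1 - x) ^ (z - ρ) ≤ 1 := Real.rpow_le_one h1x0 (by linarith) (by linarith)
      calc x ^ ρ * (1 - x) ^ (z - ρ) ≤ 1 * 1 :=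
            mul_le_mul e1 e2 (Real.rpow_nonneg h1x0 _) (by norm_num)
        _ = 1 := by norm_num
    have hcore : sewK z * (x ^ z) + sewK z * ((1 - x) ^ z) + x ^ ρ * (1 - x) ^ (z - ρ)
        ≤ sewK z := by
      have e1 : sewK z * (x ^ z) ≤ sewK z * (x * lam) :=
        mul_le_mul_of_nonneg_left hxz hK.le
      have e2 : sewK z * ((1 - x) ^ z) ≤ sewK z * ((1 - x) * lam) :=
        mul_le_mul_of_nonneg_left h1xz hK.le
      have e3 := sewK_mul hz
      rw [← hlamdef] at e3
      nlinarith [hAx]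
    -- rpow expansions
    have exz : (x * d) ^ z = x ^ z * d ^ z := Real.mul_rpow hx0 hd0
    have e1xz : ((1 - x) * d) ^ z = (1 - x) ^ z * d ^ z := Real.mul_rpow h1x0 hd0
    have exρ : (x * d) ^ ρ = x ^ ρ * d ^ ρ := Real.mul_rpow hx0 hd0
    have e1xρ : ((1 - x) * d) ^ (z - ρ) = (1 - x) ^ (z - ρ) * d ^ (z - ρ) :=
      Real.mul_rpow h1x0 hd0
    have edz : d ^ ρ * d ^ (z - ρ) = d ^ z := by
      rw [← Real.rpow_add' hd0 (by rw [show ρ + (z - ρ) = z by ring]; linarith)]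
      norm_num
    have hdz0 : (0:ℝ) ≤ d ^ z := Real.rpow_nonneg hd0 z
    calc |sewT P m α β - P α β|
        ≤ |sewT P j α γ - P α γ| + |sewT P k γ β - P γ β| + |A α γ β| := habs
      _ ≤ sewK z * M * (x * d) ^ z + sewK z * M * ((1 - x) * d) ^ z
            + M * (x * d) ^ ρ * ((1 - x) * d) ^ (z - ρ) := by
          rw [hγα] at hX; rw [hβγ] at hY; rw [hγα, hβγ] at *
          linarith [hX, hY, hA]
      _ = M * d ^ z * (sewK z * (x ^ z) + sewK z * ((1 - x) ^ z)
            + x ^ ρ * (1 - x) ^ (z - ρ)) := by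
          rw [exz, e1xz, exρ, e1xρ]
          calc sewK z * M * (x ^ z * d ^ z) + sewK z * M * ((1 - x) ^ z * d ^ z)
              + M * (x ^ ρ * d ^ ρ) * ((1 - x) ^ (z - ρ) * d ^ (z - ρ))
              = sewK z * M * (x ^ z * d ^ z) + sewK z * M * ((1 - x) ^ z * d ^ z)
              + M * (x ^ ρ * (1 - x) ^ (z - ρ)) * (d ^ ρ * d ^ (z - ρ)) := by ring
            _ = _ := by rw [edz]; ring
      _ ≤ M * d ^ z * sewK z := by
          exact mul_le_mul_of_nonneg_left hcore (mul_nonneg hM hdz0)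
      _ = sewK z * M * d ^ z := by ring

lemma sewT_refine (z M ρ : ℝ) (hz : 1 < z) (hρ0 : 0 < ρ) (hρz : ρ < z) (hM : 0 ≤ M)
    (A : ℝ → ℝ → ℝ → ℝ) (P : ℝ → ℝ → ℝ)
    (hP : ∀ s u t : ℝ, A s u t = P s t - P u t - P s u)
    (hb : ∀ s u t : ℝ, |A s u t| ≤ M * |u - s| ^ ρ * |t - u| ^ (z - ρ))
    (n m : ℕ) (hn : n ≠ 0) (hm : m ≠ 0) (s t : ℝ) :
    |sewT P (n * m) s t - sewT P n s t| ≤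
      (n:ℝ) * (sewK z * M * (|t - s| / n) ^ z) := by
  have hn' : (0:ℝ) < (n:ℝ) := by exact_mod_cast Nat.pos_of_ne_zero hn
  have hm' : (0:ℝ) < (m:ℝ) := by exact_mod_cast Nat.pos_of_ne_zero hm
  set h : ℝ := (t - s) / ((n:ℝ) * (m:ℝ)) with hhdef
  set y : ℕ → ℝ := fun a => s + (a:ℝ) * ((t - s) / n) with hydef
  have hmh : (m:ℝ) * h = (t - s) / n := by
    rw [hhdef]; field_simp
  have e0 : sewT P (n * m) s t = sewU P (n * m) s h := by
    unfold sewT; congr 1; rw [hhdef]; push_cast; ring_nf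
  have e1 : sewT P (n * m) s t = ∑ a ∈ Finset.range n, sewT P m (y a) (y (a + 1)) := by
    rw [e0, sewU_mul]
    refine Finset.sum_congr rfl fun a _ => ?_
    have hx : s + (a:ℝ) * ((m:ℝ) * h) = y a := by rw [hmh, hydef]
    rw [hx]
    refine sewU_eq_sewT P m hm (y a) h (y (a + 1)) ?_
    rw [hydef]
    simp only []
    push_cast
    rw [hmh]
    ring
  have e2 : sewT P n s t = ∑ a ∈ Finset.range n, P (y a) (y (a + 1)) := by
    unfold sewT sewU
    refine Finset.sum_congr rfl fun a _ => ?_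
    rw [hydef]; push_cast; ring_nf
  have hys : ∀ a : ℕ, |y (a + 1) - y a| = |t - s| / n := by
    intro a
    rw [hydef]
    simp only []
    rw [show s + ((a + 1 : ℕ):ℝ) * ((t - s) / n) - (s + (a:ℝ) * ((t - s) / n))
        = (t - s) / n by push_cast; ring]
    rw [abs_div, abs_of_pos hn']
  calc |sewT P (n * m) s t - sewT P n s t|
      = |∑ a ∈ Finset.range n, (sewT P m (y a) (y (a + 1)) - P (y a) (y (a + 1)))| := by
        rw [e1, e2, Finset.sum_sub_distrib]
    _ ≤ ∑ a ∈ Finset.range n, |sewT P m (y a) (y (a + 1)) - P (y a) (y (a + 1))| :=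
        Finset.abs_sum_le_sum_abs _ _
    _ ≤ ∑ a ∈ Finset.range n, sewK z * M * (|t - s| / n) ^ z := by
        refine Finset.sum_le_sum fun a _ => ?_
        have := sewT_sub_P z M ρ hz hρ0 hρz hM A P hP hb m hm (y a) (y (a + 1))
        rwa [hys a] at this
    _ = (n:ℝ) * (sewK z * M * (|t - s| / n) ^ z) := by
        rw [Finset.sum_const, Finset.card_range, nsmul_eq_mul]

lemma sewT_double (A : ℝ → ℝ → ℝ → ℝ) (P : ℝ → ℝ → ℝ)
    (hP : ∀ s u t : ℝ, A s u t = P s t - P u t - P s u)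
    (n : ℕ) (hn : n ≠ 0) (s t : ℝ) :
    sewT P (2 * n) s t = sewT P n s t -
      ∑ a ∈ Finset.range n, A (s + (a:ℝ) * ((t - s) / n))
        (s + (a:ℝ) * ((t - s) / n) + (t - s) / (2 * n))
        (s + ((a:ℝ) + 1) * ((t - s) / n)) := by
  have hn' : (0:ℝ) < (n:ℝ) := by exact_mod_cast Nat.pos_of_ne_zero hn
  set h2 : ℝ := (t - s) / (2 * (n:ℝ)) with hh2
  have h2' : 2 * h2 = (t - s) / (n:ℝ) := by rw [hh2]; field_simp
  have key : ∀ x : ℝ, sewU P 2 x h2 = P x (x + 2 * h2) - A x (x + h2) (x + 2 * h2) := by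
    intro x
    have e : sewU P 2 x h2
        = P (x + (0:ℝ) * h2) (x + ((0:ℝ) + 1) * h2)
          + P (x + (1:ℝ) * h2) (x + ((1:ℝ) + 1) * h2) := by
      unfold sewU
      rw [Finset.sum_range_succ, Finset.sum_range_one]
      norm_num
    rw [e, hP x (x + h2) (x + 2 * h2)]
    norm_num
    ring_nf
  have e0 : sewT P (2 * n) s t = ∑ a ∈ Finset.range n, sewU P 2 (s + (a:ℝ) * (2 * h2)) h2 := by
    unfold sewT
    rw [show 2 * n = n * 2 by ring, sewU_mul]
    refine Finset.sum_congr rfl fun a _ => ?_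
    have c1 : ((n * 2 : ℕ):ℝ) = 2 * (n:ℝ) := by push_cast; ring
    congr 1
    · rw [c1, ← hh2]; push_cast; ring
    · rw [c1, ← hh2]
  have e2 : sewT P n s t = ∑ a ∈ Finset.range n, P (s + (a:ℝ) * (2 * h2)) (s + (a:ℝ) * (2 * h2) + 2 * h2) := by
    unfold sewT sewU
    refine Finset.sum_congr rfl fun a _ => ?_
    rw [h2']
    push_cast
    ring_nf
  rw [e0, e2]
  rw [Finset.sum_congr rfl fun (a : ℕ) _ => key (s + (a:ℝ) * (2 * h2))]
  rw [Finset.sum_sub_distrib]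
  congr 1
  refine Finset.sum_congr rfl fun a _ => ?_
  rw [h2']
  push_cast
  ring_nf

lemma sewT_double_bound (z M ρ : ℝ) (hz : 1 < z) (hρ0 : 0 < ρ) (hρz : ρ < z) (hM : 0 ≤ M)
    (A : ℝ → ℝ → ℝ → ℝ) (P : ℝ → ℝ → ℝ)
    (hP : ∀ s u t : ℝ, A s u t = P s t - P u t - P s u)
    (hb : ∀ s u t : ℝ, |A s u t| ≤ M * |u - s| ^ ρ * |t - u| ^ (z - ρ))
    (n : ℕ) (hn : n ≠ 0) (s t : ℝ) :
    |sewT P (2 * n) s t - sewT P n s t| ≤ (n:ℝ) * (M * (|t - s| / (2 * n)) ^ z) := by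
  have hn' : (0:ℝ) < (n:ℝ) := by exact_mod_cast Nat.pos_of_ne_zero hn
  have h2n : (0:ℝ) < 2 * (n:ℝ) := by linarith
  rw [sewT_double A P hP n hn s t]
  rw [show sewT P n s t -
      (∑ a ∈ Finset.range n, A (s + (a:ℝ) * ((t - s) / n))
        (s + (a:ℝ) * ((t - s) / n) + (t - s) / (2 * n))
        (s + ((a:ℝ) + 1) * ((t - s) / n))) - sewT P n s t
      = -(∑ a ∈ Finset.range n, A (s + (a:ℝ) * ((t - s) / n))
        (s + (a:ℝ) * ((t - s) / n) + (t - s) / (2 * n))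
        (s + ((a:ℝ) + 1) * ((t - s) / n))) by ring, abs_neg]
  calc |∑ a ∈ Finset.range n, A (s + (a:ℝ) * ((t - s) / n))
        (s + (a:ℝ) * ((t - s) / n) + (t - s) / (2 * n))
        (s + ((a:ℝ) + 1) * ((t - s) / n))|
      ≤ ∑ a ∈ Finset.range n, |A (s + (a:ℝ) * ((t - s) / n))
        (s + (a:ℝ) * ((t - s) / n) + (t - s) / (2 * n))
        (s + ((a:ℝ) + 1) * ((t - s) / n))| := Finset.abs_sum_le_sum_abs _ _
    _ ≤ ∑ _a ∈ Finset.range n, M * (|t - s| / (2 * n)) ^ z := by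
        refine Finset.sum_le_sum fun a _ => ?_
        have h1 := hb (s + (a:ℝ) * ((t - s) / n))
          (s + (a:ℝ) * ((t - s) / n) + (t - s) / (2 * n))
          (s + ((a:ℝ) + 1) * ((t - s) / n))
        have c1 : s + (a:ℝ) * ((t - s) / n) + (t - s) / (2 * n)
            - (s + (a:ℝ) * ((t - s) / n)) = (t - s) / (2 * n) := by ring
        have c2 : s + ((a:ℝ) + 1) * ((t - s) / n)
            - (s + (a:ℝ) * ((t - s) / n) + (t - s) / (2 * n)) = (t - s) / (2 * n) := by
          field_simp
          ring
        rw [c1, c2] at h1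
        have cab : |(t - s) / (2 * (n:ℝ))| = |t - s| / (2 * n) := by
          rw [abs_div, abs_of_pos h2n]
        rw [cab] at h1
        have merge : M * (|t - s| / (2 * n)) ^ ρ * (|t - s| / (2 * n)) ^ (z - ρ)
            = M * (|t - s| / (2 * n)) ^ z := by
          rw [mul_assoc, ← Real.rpow_add' (by positivity) (by rw [show ρ + (z - ρ) = z by ring]; linarith)]
          norm_num
        rw [merge] at h1
        exact h1
    _ = (n:ℝ) * (M * (|t - s| / (2 * n)) ^ z) := by
        rw [Finset.sum_const, Finset.card_range, nsmul_eq_mul]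

lemma sewT_rev_bound (z M ρ : ℝ) (hz : 1 < z) (hρ0 : 0 < ρ) (hρz : ρ < z) (hM : 0 ≤ M)
    (A : ℝ → ℝ → ℝ → ℝ) (P : ℝ → ℝ → ℝ)
    (hP : ∀ s u t : ℝ, A s u t = P s t - P u t - P s u)
    (hPd : ∀ a : ℝ, P a a = 0)
    (hb : ∀ s u t : ℝ, |A s u t| ≤ M * |u - s| ^ ρ * |t - u| ^ (z - ρ))
    (n : ℕ) (hn : n ≠ 0) (s t : ℝ) :
    |sewT P n s t + sewT P n t s| ≤ (n:ℝ) * (M * (|t - s| / n) ^ z) := by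
  have hn' : (0:ℝ) < (n:ℝ) := by exact_mod_cast Nat.pos_of_ne_zero hn
  set x : ℕ → ℝ := fun i => s + (i:ℝ) * ((t - s) / n) with hxdef
  have e1 : sewT P n s t = ∑ i ∈ Finset.range n, P (x i) (x (i + 1)) := by
    unfold sewT sewU
    refine Finset.sum_congr rfl fun i _ => ?_
    rw [hxdef]; push_cast; ring_nf
  have e2 : sewT P n t s = ∑ i ∈ Finset.range n, P (x (i + 1)) (x i) := by
    unfold sewT sewU
    rw [← Finset.sum_range_reflect]
    refine Finset.sum_congr rfl fun i hi => ?_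
    have hi' : i < n := Finset.mem_range.1 hi
    have hcast : ((n - 1 - i : ℕ) : ℝ) = (n:ℝ) - 1 - (i:ℝ) := by
      have h1 : 1 + i ≤ n := by omega
      push_cast [Nat.cast_sub (by omega : 1 ≤ n), Nat.cast_sub (by omega : i ≤ n - 1)]
      ring
    rw [hxdef]
    simp only [hcast]
    have harg1 : t + ((n:ℝ) - 1 - (i:ℝ)) * ((s - t) / n) = s + ((i:ℝ) + 1) * ((t - s) / n) := by
      field_simp
      ring
    have harg2 : t + (((n:ℝ) - 1 - (i:ℝ)) + 1) * ((s - t) / n) = s + (i:ℝ) * ((t - s) / n) := by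
      field_simp
      ring
    push_cast
    rw [harg1, harg2]
  have hstep : ∀ i : ℕ, |x (i + 1) - x i| = |t - s| / n := by
    intro i
    rw [hxdef]
    simp only []
    rw [show s + ((i + 1 : ℕ):ℝ) * ((t - s) / n) - (s + (i:ℝ) * ((t - s) / n))
        = (t - s) / n by push_cast; ring]
    rw [abs_div, abs_of_pos hn']
  have hpair : ∀ i : ℕ, P (x i) (x (i + 1)) + P (x (i + 1)) (x i)
      = -(A (x i) (x (i + 1)) (x i)) := by
    intro i
    have := hP (x i) (x (i + 1)) (x i)
    rw [hPd (x i)] at this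
    linarith
  have e3 : sewT P n s t + sewT P n t s
      = ∑ i ∈ Finset.range n, -(A (x i) (x (i + 1)) (x i)) := by
    rw [e1, e2, ← Finset.sum_add_distrib]
    exact Finset.sum_congr rfl fun i _ => hpair i
  rw [e3]
  calc |∑ i ∈ Finset.range n, -(A (x i) (x (i + 1)) (x i))|
      ≤ ∑ i ∈ Finset.range n, |(-(A (x i) (x (i + 1)) (x i)))| :=
        Finset.abs_sum_le_sum_abs _ _
    _ ≤ ∑ _i ∈ Finset.range n, M * (|t - s| / n) ^ z := by
        refine Finset.sum_le_sum fun i _ => ?_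
        rw [abs_neg]
        have h1 := hb (x i) (x (i + 1)) (x i)
        rw [hstep i, show x i - x (i + 1) = -(x (i + 1) - x i) by ring, abs_neg, hstep i] at h1
        have merge : M * (|t - s| / n) ^ ρ * (|t - s| / n) ^ (z - ρ)
            = M * (|t - s| / n) ^ z := by
          rw [mul_assoc, ← Real.rpow_add' (by positivity)
            (by rw [show ρ + (z - ρ) = z by ring]; linarith)]
          norm_num
        rw [merge] at h1
        exact h1
    _ = (n:ℝ) * (M * (|t - s| / n) ^ z) := by
        rw [Finset.sum_const, Finset.card_range, nsmul_eq_mul]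

lemma sew_conv {z : ℝ} (d : ℝ) (hd : 0 ≤ d) (j : ℕ) :
    (d / (2:ℝ) ^ j) ^ z = d ^ z * ((2:ℝ) ^ (1 - z)) ^ j / (2:ℝ) ^ j := by
  have h2j : (0:ℝ) < (2:ℝ) ^ j := by positivity
  rw [Real.div_rpow hd h2j.le]
  have e1 : ((2:ℝ) ^ j) ^ z = (2:ℝ) ^ ((j:ℝ) * z) := by
    rw [← Real.rpow_natCast (2:ℝ) j, ← Real.rpow_mul (by norm_num)]
  have e2 : ((2:ℝ) ^ (1 - z)) ^ j = (2:ℝ) ^ ((1 - z) * (j:ℝ)) := by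
    rw [← Real.rpow_natCast ((2:ℝ) ^ (1 - z)) j, ← Real.rpow_mul (by norm_num)]
  have e3 : ((2:ℝ) ^ j : ℝ) = (2:ℝ) ^ ((j:ℝ)) := by
    rw [← Real.rpow_natCast (2:ℝ) j]
  rw [e1, e2, e3]
  rw [show (1 - z) * (j:ℝ) = (j:ℝ) - (j:ℝ) * z by ring, Real.rpow_sub two_pos]
  field_simp

/-- The sewing lemma (existence and uniqueness of `Λ`): if `z > 1` and
`A : ℝ³ → ℝ` is continuous, vanishing on the diagonal, lies in the image of `N`,
and satisfies `|A_{sut}| ≤ M |u-s|^ρ |t-u|^{z-ρ}` for some `0 < ρ < z`, then there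
is a unique `R ∈ ΩC^z` with `N R = A`, and `‖R‖_z ≤ M / (2^z - 2)`. -/
theorem sewing_lemma (z M ρ : ℝ) (hz : 1 < z) (hρ0 : 0 < ρ) (hρz : ρ < z) (hM : 0 ≤ M)
    (A : ℝ → ℝ → ℝ → ℝ)
    (hcont : Continuous fun p : ℝ × ℝ × ℝ => A p.1 p.2.1 p.2.2)
    (hdiag : ∀ t : ℝ, A t t t = 0)
    (himage : ∃ P : ℝ → ℝ → ℝ, ∀ s u t : ℝ, A s u t = P s t - P u t - P s u)
    (hbound : ∀ s u t : ℝ, |A s u t| ≤ M * |u - s| ^ ρ * |t - u| ^ (z - ρ)) :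
    (∃ R : ℝ → ℝ → ℝ,
        (∀ s t : ℝ, |R s t| ≤ M / ((2 : ℝ) ^ z - 2) * |t - s| ^ z) ∧
        (∀ s u t : ℝ, A s u t = R s t - R u t - R s u)) ∧
    (∀ R R' : ℝ → ℝ → ℝ,
        (∃ K, ∀ s t : ℝ, |R s t| ≤ K * |t - s| ^ z) →
        (∃ K, ∀ s t : ℝ, |R' s t| ≤ K * |t - s| ^ z) →
        (∀ s u t : ℝ, A s u t = R s t - R u t - R s u) →
        (∀ s u t : ℝ, A s u t = R' s t - R' u t - R' s u) →
        R = R') := by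
  obtain ⟨P, hP⟩ := himage
  have hPd : ∀ a : ℝ, P a a = 0 := by
    intro a
    have h1 := hP a a a
    have h2 := hdiag a
    linarith
  set w : ℝ := (2:ℝ) ^ (1 - z) with hwdef
  have hw0 : (0:ℝ) < w := Real.rpow_pos_of_pos two_pos _
  have hw1 : w < 1 := Real.rpow_lt_one_of_one_lt_of_neg one_lt_two (by linarith)
  have h2z : (2:ℝ) < (2:ℝ) ^ z := by
    calc (2:ℝ) = (2:ℝ) ^ (1:ℝ) := (Real.rpow_one 2).symm
      _ < (2:ℝ) ^ z := Real.rpow_lt_rpow_of_exponent_lt one_lt_two hz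
  have hK : 0 < sewK z := sewK_pos hz
  have hcast : ∀ k : ℕ, (((2:ℕ) ^ k : ℕ) : ℝ) = (2:ℝ) ^ k := by
    intro k; push_cast; ring
  have hw2z : w * (2:ℝ) ^ z = 2 := by
    rw [hwdef, ← Real.rpow_add two_pos]
    norm_num
  -- step bound for dyadic refinement
  have step : ∀ s t : ℝ, ∀ k : ℕ, |sewT P (2 ^ (k+1)) s t - sewT P (2 ^ k) s t|
      ≤ (M * |t - s| ^ z * (w / 2)) * w ^ k := by
    intro s t k
    have hb2 := sewT_double_bound z M ρ hz hρ0 hρz hM A P hP hbound (2 ^ k)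
      (pow_ne_zero k two_ne_zero) s t
    rw [show (2 * 2 ^ k : ℕ) = 2 ^ (k+1) by rw [pow_succ]; ring] at hb2
    refine hb2.trans (le_of_eq ?_)
    rw [hcast k]
    rw [show 2 * (2:ℝ) ^ k = (2:ℝ) ^ (k+1) by rw [pow_succ]; ring]
    rw [sew_conv (|t - s|) (abs_nonneg (t - s)) (k+1), ← hwdef]
    have h2k : ((2:ℝ) ^ (k+1)) ≠ 0 := by positivity
    rw [pow_succ (2:ℝ) k, pow_succ w k]
    field_simp
  have hcau : ∀ s t : ℝ, CauchySeq (fun k => sewT P (2 ^ k) s t) := by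
    intro s t
    apply cauchySeq_of_le_geometric w (M * |t - s| ^ z * (w / 2)) hw1
    intro k
    rw [Real.dist_eq, abs_sub_comm]
    exact step s t k
  obtain ⟨I, hI⟩ : ∃ I : ℝ → ℝ → ℝ,
      ∀ s t, Filter.Tendsto (fun k => sewT P (2 ^ k) s t) Filter.atTop (nhds (I s t)) := by
    have h := fun s t => cauchySeq_tendsto_of_complete (hcau s t)
    exact ⟨fun s t => (h s t).choose, fun s t => (h s t).choose_spec⟩
  -- refinement comparison to the limit
  have TkI : ∀ s t : ℝ, ∀ k : ℕ, |sewT P (2 ^ k) s t - I s t|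
      ≤ sewK z * M * |t - s| ^ z * w ^ k := by
    intro s t k
    have hTend : Filter.Tendsto (fun j => sewT P (2 ^ k * 2 ^ j) s t) Filter.atTop
        (nhds (I s t)) := by
      have he : (fun j => sewT P (2 ^ k * 2 ^ j) s t)
          = (fun i => sewT P (2 ^ i) s t) ∘ (fun j => j + k) := by
        funext j
        simp only [Function.comp]
        rw [show 2 ^ k * 2 ^ j = 2 ^ (j + k) by rw [pow_add]; ring]
      rw [he]
      exact (hI s t).comp (Filter.tendsto_add_atTop_nat k)
    have habs : Filter.Tendsto (fun j => |sewT P (2 ^ k) s t - sewT P (2 ^ k * 2 ^ j) s t|)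
        Filter.atTop (nhds |sewT P (2 ^ k) s t - I s t|) :=
      (tendsto_const_nhds.sub hTend).abs
    refine le_of_tendsto habs (Filter.Eventually.of_forall fun j => ?_)
    have hr := sewT_refine z M ρ hz hρ0 hρz hM A P hP hbound (2 ^ k) (2 ^ j)
      (pow_ne_zero _ two_ne_zero) (pow_ne_zero _ two_ne_zero) s t
    rw [abs_sub_comm] at hr
    refine hr.trans (le_of_eq ?_)
    rw [hcast k, sew_conv (|t - s|) (abs_nonneg (t - s)) k, ← hwdef]
    have h2k : ((2:ℝ) ^ k) ≠ 0 := by positivity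
    field_simp
  -- limits along n * 2^k
  have Tn2k : ∀ n : ℕ, n ≠ 0 → ∀ s t : ℝ,
      Filter.Tendsto (fun k => sewT P (n * 2 ^ k) s t) Filter.atTop (nhds (I s t)) := by
    intro n hn s t
    have diff : ∀ k : ℕ, |sewT P (n * 2 ^ k) s t - sewT P (2 ^ k) s t|
        ≤ sewK z * M * |t - s| ^ z * w ^ k := by
      intro k
      have hr := sewT_refine z M ρ hz hρ0 hρz hM A P hP hbound (2 ^ k) n
        (pow_ne_zero _ two_ne_zero) hn s t
      rw [show (2 ^ k * n : ℕ) = n * 2 ^ k by ring] at hr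
      refine hr.trans (le_of_eq ?_)
      rw [hcast k, sew_conv (|t - s|) (abs_nonneg (t - s)) k, ← hwdef]
      have h2k : ((2:ℝ) ^ k) ≠ 0 := by positivity
      field_simp
    have h0 : Filter.Tendsto (fun k => sewT P (n * 2 ^ k) s t - sewT P (2 ^ k) s t)
        Filter.atTop (nhds 0) := by
      have hnorm : ∀ k : ℕ, ‖sewT P (n * 2 ^ k) s t - sewT P (2 ^ k) s t‖
          ≤ sewK z * M * |t - s| ^ z * w ^ k := fun k => by
        rw [Real.norm_eq_abs]; exact diff k
      have hg : Filter.Tendsto (fun k : ℕ => sewK z * M * |t - s| ^ z * w ^ k)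
          Filter.atTop (nhds 0) := by
        have := (tendsto_pow_atTop_nhds_zero_of_lt_one hw0.le hw1).const_mul
          (sewK z * M * |t - s| ^ z)
        simpa using this
      exact squeeze_zero_norm hnorm hg
    have := h0.add (hI s t)
    simpa using this
  -- the sewing bound
  have geo : ∀ k : ℕ, ∑ j ∈ Finset.range k, w ^ j ≤ (1 - w)⁻¹ := by
    intro k
    have h1w : (0:ℝ) < 1 - w := by linarith
    rw [geom_sum_eq (ne_of_lt hw1) k]
    have e1 : (w ^ k - 1) / (w - 1) = (1 - w ^ k) / (1 - w) := by
      rw [div_eq_div_iff (by linarith) (by linarith)]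
      ring
    rw [e1]
    rw [div_le_iff₀ h1w, inv_mul_cancel₀ (by linarith : (1:ℝ) - w ≠ 0)]
    have : (0:ℝ) ≤ w ^ k := pow_nonneg hw0.le k
    linarith
  have hRb : ∀ s t : ℝ, |P s t - I s t| ≤ M / ((2:ℝ) ^ z - 2) * |t - s| ^ z := by
    intro s t
    have habs : Filter.Tendsto (fun k => |P s t - sewT P (2 ^ k) s t|) Filter.atTop
        (nhds |P s t - I s t|) := (tendsto_const_nhds.sub (hI s t)).abs
    refine le_of_tendsto habs (Filter.Eventually.of_forall fun k => ?_)
    have tele := dist_le_range_sum_dist (fun j => sewT P (2 ^ j) s t) k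
    rw [show sewT P (2 ^ 0) s t = P s t by rw [pow_zero, sewT_one]] at tele
    calc |P s t - sewT P (2 ^ k) s t| = dist (P s t) (sewT P (2 ^ k) s t) :=
          (Real.dist_eq _ _).symm
      _ ≤ ∑ j ∈ Finset.range k, dist (sewT P (2 ^ j) s t) (sewT P (2 ^ (j+1)) s t) := tele
      _ ≤ ∑ j ∈ Finset.range k, (M * |t - s| ^ z * (w / 2)) * w ^ j := by
          refine Finset.sum_le_sum fun j _ => ?_
          rw [Real.dist_eq, abs_sub_comm]
          exact step s t j
      _ = (M * |t - s| ^ z * (w / 2)) * ∑ j ∈ Finset.range k, w ^ j := by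
          rw [Finset.mul_sum]
      _ ≤ (M * |t - s| ^ z * (w / 2)) * (1 - w)⁻¹ := by
          refine mul_le_mul_of_nonneg_left (geo k) ?_
          have : (0:ℝ) ≤ |t - s| ^ z := Real.rpow_nonneg (abs_nonneg _) z
          positivity
      _ = M / ((2:ℝ) ^ z - 2) * |t - s| ^ z := by
          have h1w : (1:ℝ) - w ≠ 0 := by linarith
          have hden : ((2:ℝ) ^ z - 2) ≠ 0 := by linarith
          field_simp
          linear_combination (M * |t - s| ^ z) * hw2z
  -- commensurable additivity
  have Isplit : ∀ p q : ℕ, p ≠ 0 → q ≠ 0 → ∀ s t : ℝ,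
      I s t = I s (s + ((p:ℝ) / ((p:ℝ) + (q:ℝ))) * (t - s))
            + I (s + ((p:ℝ) / ((p:ℝ) + (q:ℝ))) * (t - s)) t := by
    intro p q hp hq s t
    set u : ℝ := s + ((p:ℝ) / ((p:ℝ) + (q:ℝ))) * (t - s) with hu
    have hp' : (0:ℝ) < (p:ℝ) := by exact_mod_cast Nat.pos_of_ne_zero hp
    have hq' : (0:ℝ) < (q:ℝ) := by exact_mod_cast Nat.pos_of_ne_zero hq
    have key : ∀ k : ℕ, sewT P ((p + q) * 2 ^ k) s t
        = sewT P (p * 2 ^ k) s u + sewT P (q * 2 ^ k) u t := by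
      intro k
      have h2k : (0:ℝ) < ((2:ℕ) ^ k : ℕ) := by
        exact_mod_cast Nat.pos_of_ne_zero (pow_ne_zero k two_ne_zero)
      have hs := sewT_split P (p * 2 ^ k) (q * 2 ^ k)
        (Nat.mul_ne_zero hp (pow_ne_zero k two_ne_zero))
        (Nat.mul_ne_zero hq (pow_ne_zero k two_ne_zero)) s t
      rw [show p * 2 ^ k + q * 2 ^ k = (p + q) * 2 ^ k by ring] at hs
      have hfrac : ((p * 2 ^ k : ℕ):ℝ) / (((p * 2 ^ k : ℕ):ℝ) + ((q * 2 ^ k : ℕ):ℝ))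
          = (p:ℝ) / ((p:ℝ) + (q:ℝ)) := by
        push_cast
        rw [div_eq_div_iff (by positivity) (by positivity)]
        ring
      rw [hfrac] at hs
      rw [hs, hu]
    have h1 := Tn2k (p + q) (by omega) s t
    have h4 : Filter.Tendsto (fun k => sewT P ((p + q) * 2 ^ k) s t) Filter.atTop
        (nhds (I s u + I u t)) := by
      rw [show (fun k => sewT P ((p + q) * 2 ^ k) s t)
          = fun k => sewT P (p * 2 ^ k) s u + sewT P (q * 2 ^ k) u t from funext key]
      exact (Tn2k p hp s u).add (Tn2k q hq u t)
    exact tendsto_nhds_unique h1 h4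
  have Iself : ∀ s : ℝ, I s s = 0 := by
    intro s
    have h0 : Filter.Tendsto (fun _ : ℕ => (0:ℝ)) Filter.atTop (nhds 0) := tendsto_const_nhds
    have := hI s s
    rw [show (fun k => sewT P (2 ^ k) s s) = fun _ : ℕ => (0:ℝ) from
      funext fun k => sewT_self P hPd _ s] at this
    exact tendsto_nhds_unique this h0
  have Isym : ∀ s t : ℝ, I s t + I t s = 0 := by
    intro s t
    have h1 : Filter.Tendsto (fun k => sewT P (2 ^ k) s t + sewT P (2 ^ k) t s)
        Filter.atTop (nhds (I s t + I t s)) := (hI s t).add (hI t s)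
    have hb0 : ∀ k : ℕ, ‖sewT P (2 ^ k) s t + sewT P (2 ^ k) t s‖
        ≤ M * |t - s| ^ z * w ^ k := by
      intro k
      rw [Real.norm_eq_abs]
      have hr := sewT_rev_bound z M ρ hz hρ0 hρz hM A P hP hPd hbound (2 ^ k)
        (pow_ne_zero k two_ne_zero) s t
      refine hr.trans (le_of_eq ?_)
      rw [hcast k, sew_conv (|t - s|) (abs_nonneg (t - s)) k, ← hwdef]
      have h2k : ((2:ℝ) ^ k) ≠ 0 := by positivity
      field_simp
    have hg : Filter.Tendsto (fun k : ℕ => M * |t - s| ^ z * w ^ k) Filter.atTop (nhds 0) := by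
      have := (tendsto_pow_atTop_nhds_zero_of_lt_one hw0.le hw1).const_mul (M * |t - s| ^ z)
      simpa using this
    exact tendsto_nhds_unique h1 (squeeze_zero_norm hb0 hg)
  -- continuity of the remainder
  have Scont : ∀ k : ℕ, Continuous (fun pr : ℝ × ℝ => P pr.1 pr.2 - sewT P (2 ^ k) pr.1 pr.2) := by
    intro k
    induction k with
    | zero =>
      have he : (fun pr : ℝ × ℝ => P pr.1 pr.2 - sewT P (2 ^ 0) pr.1 pr.2)
          = fun _ => (0:ℝ) := by
        funext pr; rw [pow_zero, sewT_one]; ring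
      rw [he]; exact continuous_const
    | succ k ih =>
      have hde : ∀ pr : ℝ × ℝ, P pr.1 pr.2 - sewT P (2 ^ (k+1)) pr.1 pr.2
          = (P pr.1 pr.2 - sewT P (2 ^ k) pr.1 pr.2)
            + ∑ a ∈ Finset.range (2 ^ k),
              A (pr.1 + (a:ℝ) * ((pr.2 - pr.1) / (2:ℝ) ^ k))
                (pr.1 + (a:ℝ) * ((pr.2 - pr.1) / (2:ℝ) ^ k) + (pr.2 - pr.1) / (2 * (2:ℝ) ^ k))
                (pr.1 + ((a:ℝ) + 1) * ((pr.2 - pr.1) / (2:ℝ) ^ k)) := by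
        intro pr
        have hd := sewT_double A P hP (2 ^ k) (pow_ne_zero k two_ne_zero) pr.1 pr.2
        rw [show (2 * 2 ^ k : ℕ) = 2 ^ (k+1) by rw [pow_succ]; ring] at hd
        rw [hd, hcast k]
        ring
      rw [show (fun pr : ℝ × ℝ => P pr.1 pr.2 - sewT P (2 ^ (k+1)) pr.1 pr.2) = _ from
        funext hde]
      refine ih.add ?_
      refine continuous_finset_sum _ fun a _ => ?_
      have c1 : Continuous (fun pr : ℝ × ℝ => pr.1 + (a:ℝ) * ((pr.2 - pr.1) / (2:ℝ) ^ k)) := by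
        fun_prop
      have c2 : Continuous (fun pr : ℝ × ℝ =>
          pr.1 + (a:ℝ) * ((pr.2 - pr.1) / (2:ℝ) ^ k) + (pr.2 - pr.1) / (2 * (2:ℝ) ^ k)) := by
        fun_prop
      have c3 : Continuous (fun pr : ℝ × ℝ => pr.1 + ((a:ℝ) + 1) * ((pr.2 - pr.1) / (2:ℝ) ^ k)) := by
        fun_prop
      exact hcont.comp (c1.prodMk (c2.prodMk c3))
  have hRcont : Continuous (fun pr : ℝ × ℝ => P pr.1 pr.2 - I pr.1 pr.2) := by
    rw [continuous_iff_continuousAt]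
    intro p0
    set B : ℝ := |p0.2 - p0.1| + 1 with hB
    have hBpos : 0 < B := by positivity
    have hOopen : IsOpen {pr : ℝ × ℝ | |pr.2 - pr.1| < B} :=
      isOpen_lt ((continuous_snd.sub continuous_fst).abs) continuous_const
    have hmem : p0 ∈ {pr : ℝ × ℝ | |pr.2 - pr.1| < B} := by
      show |p0.2 - p0.1| < B
      rw [hB]; linarith
    have hTU : TendstoUniformlyOn (fun k (pr : ℝ × ℝ) => P pr.1 pr.2 - sewT P (2 ^ k) pr.1 pr.2)
        (fun pr => P pr.1 pr.2 - I pr.1 pr.2) Filter.atTop {pr : ℝ × ℝ | |pr.2 - pr.1| < B} := by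
      rw [Metric.tendstoUniformlyOn_iff]
      intro ε hε
      have hlim : Filter.Tendsto (fun k : ℕ => sewK z * M * B ^ z * w ^ k) Filter.atTop
          (nhds 0) := by
        have := (tendsto_pow_atTop_nhds_zero_of_lt_one hw0.le hw1).const_mul
          (sewK z * M * B ^ z)
        simpa using this
      filter_upwards [hlim.eventually (gt_mem_nhds hε)] with k hk pr hpr
      have hpr' : |pr.2 - pr.1| < B := hpr
      rw [Real.dist_eq]
      rw [show (P pr.1 pr.2 - I pr.1 pr.2) - (P pr.1 pr.2 - sewT P (2 ^ k) pr.1 pr.2)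
          = sewT P (2 ^ k) pr.1 pr.2 - I pr.1 pr.2 by ring]
      have h2 : |pr.2 - pr.1| ^ z ≤ B ^ z :=
        Real.rpow_le_rpow (abs_nonneg _) hpr'.le (by linarith)
      calc |sewT P (2 ^ k) pr.1 pr.2 - I pr.1 pr.2|
          ≤ sewK z * M * |pr.2 - pr.1| ^ z * w ^ k := TkI pr.1 pr.2 k
        _ ≤ sewK z * M * B ^ z * w ^ k := by
            have hwk : (0:ℝ) ≤ w ^ k := pow_nonneg hw0.le k
            have hKM : (0:ℝ) ≤ sewK z * M := mul_nonneg hK.le hM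
            exact mul_le_mul_of_nonneg_right (mul_le_mul_of_nonneg_left h2 hKM) hwk
        _ < ε := hk
    exact (hTU.continuousOn (Filter.Eventually.of_forall fun k =>
      (Scont k).continuousOn).frequently).continuousAt (hOopen.mem_nhds hmem)
  -- full additivity
  have hbetw : ∀ s t θ : ℝ, 0 ≤ θ → θ ≤ 1 →
      I s (s + θ * (t - s)) + I (s + θ * (t - s)) t - I s t = 0 := by
    intro s t θ hθ0 hθ1
    rcases eq_or_ne s t with hst | hst
    · subst hst
      rw [show s + θ * (s - s) = s by ring, Iself s]
      ring
    · set g : ℝ → ℝ := fun θ' => I s (s + θ' * (t - s)) + I (s + θ' * (t - s)) t - I s t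
        with hg
      show g θ = 0
      have hgR : ∀ θ' : ℝ, g θ' = (P s t - I s t)
          - (P s (s + θ' * (t - s)) - I s (s + θ' * (t - s)))
          - (P (s + θ' * (t - s)) t - I (s + θ' * (t - s)) t)
          - A s (s + θ' * (t - s)) t := by
        intro θ'
        have := hP s (s + θ' * (t - s)) t
        rw [hg]
        simp only []
        linarith
      have hgc : Continuous g := by
        rw [show g = _ from funext hgR]
        have c1 : Continuous (fun θ' : ℝ => s + θ' * (t - s)) := by fun_prop
        have cRsu : Continuous (fun θ' : ℝ =>
            P s (s + θ' * (t - s)) - I s (s + θ' * (t - s))) :=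
          hRcont.comp (continuous_const.prodMk c1)
        have cRut : Continuous (fun θ' : ℝ =>
            P (s + θ' * (t - s)) t - I (s + θ' * (t - s)) t) :=
          hRcont.comp (c1.prodMk continuous_const)
        have cA : Continuous (fun θ' : ℝ => A s (s + θ' * (t - s)) t) :=
          hcont.comp (continuous_const.prodMk (c1.prodMk continuous_const))
        exact ((continuous_const.sub cRsu).sub cRut).sub cA
      have hrat : ∀ r : ℚ, 0 < r → r < 1 → g (r : ℝ) = 0 := by
        intro r hr0 hr1
        have hnum : 0 < r.num := Rat.num_pos.2 hr0
        have hlt : r.num < (r.den : ℤ) := Rat.num_lt_denom_iff.2 hr1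
        set p : ℕ := r.num.toNat with hpdef
        have hpz : (p : ℤ) = r.num := Int.toNat_of_nonneg hnum.le
        have hpden : p < r.den := by omega
        set q : ℕ := r.den - p with hqdef
        have hp : p ≠ 0 := by omega
        have hq : q ≠ 0 := by omega
        have hpq : (p:ℝ) + (q:ℝ) = (r.den : ℝ) := by
          have : p + q = r.den := by omega
          exact_mod_cast this
        have hfr : ((p:ℝ) / ((p:ℝ) + (q:ℝ))) = (r : ℝ) := by
          rw [hpq, Rat.cast_def]
          congr 1
          exact_mod_cast hpz
        have hsp := Isplit p q hp hq s t
        rw [hfr] at hsp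
        rw [hg]
        simp only []
        linarith
      have hcl : IsClosed {x : ℝ | g x = 0} := isClosed_eq hgc continuous_const
      have hmemcl : θ ∈ closure {x : ℝ | g x = 0} := by
        rw [Metric.mem_closure_iff]
        intro ε hε
        have hlt : max (θ - ε / 2) 0 < min (θ + ε / 2) 1 := by
          simp only [max_lt_iff, lt_min_iff]
          refine ⟨⟨by linarith, by linarith⟩, by linarith, by linarith⟩
        obtain ⟨r, hr1, hr2⟩ := exists_rat_btwn hlt
        have hr0' : (0:ℝ) < (r:ℝ) := lt_of_le_of_lt (le_max_right _ _) hr1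
        have hr1' : (r:ℝ) < 1 := lt_of_lt_of_le hr2 (min_le_right _ _)
        refine ⟨(r:ℝ), ?_, ?_⟩
        · show g (r:ℝ) = 0
          exact hrat r (by exact_mod_cast hr0') (by exact_mod_cast hr1')
        · rw [Real.dist_eq, abs_sub_lt_iff]
          have l1 : θ - ε / 2 ≤ max (θ - ε / 2) 0 := le_max_left _ _
          have l2 : min (θ + ε / 2) 1 ≤ θ + ε / 2 := min_le_left _ _
          constructor <;> linarith
      exact hcl.closure_subset hmemcl
  have hmid : ∀ a b c : ℝ, (a ≤ b ∧ b ≤ c) ∨ (c ≤ b ∧ b ≤ a) → I a b + I b c - I a c = 0 := by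
    intro a b c hor
    rcases eq_or_ne a c with hac | hac
    · subst hac
      have hb : b = a := by rcases hor with ⟨h1, h2⟩ | ⟨h1, h2⟩ <;> linarith
      subst hb
      have := Iself b
      linarith
    · have hca : c - a ≠ 0 := sub_ne_zero.2 (Ne.symm hac)
      set θ : ℝ := (b - a) / (c - a) with hθ
      have hb : b = a + θ * (c - a) := by rw [hθ]; field_simp; ring
      have hθmem : 0 ≤ θ ∧ θ ≤ 1 := by
        rcases hor with ⟨h1, h2⟩ | ⟨h1, h2⟩
        · have hlt : 0 < c - a := by
            rcases lt_or_eq_of_le (h1.trans h2) with h | h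
            · linarith
            · exact absurd h hac
          exact ⟨div_nonneg (by linarith) hlt.le, by
            rw [hθ, div_le_one hlt]; linarith⟩
        · have hlt : 0 < a - c := by
            rcases lt_or_eq_of_le (h1.trans h2) with h | h
            · linarith
            · exact absurd h.symm hac
          have hθ' : θ = (a - b) / (a - c) := by
            rw [hθ, div_eq_div_iff hca (by linarith : a - c ≠ 0)]
            ring
          rw [hθ']
          exact ⟨div_nonneg (by linarith) hlt.le, by
            rw [div_le_one hlt]; linarith⟩
      have := hbetw a c θ hθmem.1 hθmem.2
      rw [← hb] at this
      exact this
  have Iadd : ∀ s u t : ℝ, I s u + I u t - I s t = 0 := by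
    intro s u t
    rcases le_total s u with h1 | h1 <;> rcases le_total u t with h2 | h2
    · exact hmid s u t (Or.inl ⟨h1, h2⟩)
    · rcases le_total s t with h3 | h3
      · have ha := hmid s t u (Or.inl ⟨h3, h2⟩)
        have hb := Isym t u
        linarith
      · have ha := hmid u s t (Or.inr ⟨h3, h1⟩)
        have hb := Isym s u
        linarith
    · rcases le_total s t with h3 | h3
      · have ha := hmid u s t (Or.inl ⟨h1, h3⟩)
        have hb := Isym s u
        linarith
      · have ha := hmid s t u (Or.inr ⟨h2, h3⟩)
        have hb := Isym t u
        linarith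
    · exact hmid s u t (Or.inr ⟨h2, h1⟩)
  constructor
  · refine ⟨fun s t => P s t - I s t, hRb, fun s u t => ?_⟩
    have h1 := hP s u t
    have h2 := Iadd s u t
    show A s u t = (P s t - I s t) - (P u t - I u t) - (P s u - I s u)
    linarith
  · rintro R R' ⟨K1, hR1⟩ ⟨K2, hR2⟩ hA1 hA2
    funext s t
    have hDadd : ∀ a b c : ℝ, R a c - R' a c = (R a b - R' a b) + (R b c - R' b c) := by
      intro a b c
      have e1 := hA1 a b c
      have e2 := hA2 a b c
      linarith
    have hDb : ∀ a b : ℝ, |R a b - R' a b| ≤ (K1 + K2) * |b - a| ^ z := by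
      intro a b
      calc |R a b - R' a b| ≤ |R a b| + |R' a b| := abs_sub _ _
        _ ≤ K1 * |b - a| ^ z + K2 * |b - a| ^ z := add_le_add (hR1 a b) (hR2 a b)
        _ = (K1 + K2) * |b - a| ^ z := by ring
    have key : ∀ k : ℕ, ∀ a b : ℝ, |R a b - R' a b| ≤ (K1 + K2) * w ^ k * |b - a| ^ z := by
      intro k
      induction k with
      | zero =>
        intro a b
        simp only [pow_zero, mul_one]
        exact hDb a b
      | succ k ih =>
        intro a b
        have hm := hDadd a ((a + b) / 2) b
        have e1 := ih a ((a + b) / 2)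
        have e2 := ih ((a + b) / 2) b
        have habs1 : |(a + b) / 2 - a| = |b - a| / 2 := by
          rw [show (a + b) / 2 - a = (b - a) / 2 by ring, abs_div]
          norm_num
        have habs2 : |b - (a + b) / 2| = |b - a| / 2 := by
          rw [show b - (a + b) / 2 = (b - a) / 2 by ring, abs_div]
          norm_num
        rw [habs1] at e1
        rw [habs2] at e2
        have hhalf : (|b - a| / 2) ^ z = |b - a| ^ z * (w / 2) := by
          rw [Real.div_rpow (abs_nonneg _) (by norm_num : (0:ℝ) ≤ 2)]
          have h2zpos : (0:ℝ) < (2:ℝ) ^ z := by linarith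
          rw [div_eq_iff (by linarith : ((2:ℝ) ^ z) ≠ 0)]
          linear_combination (-(|b - a| ^ z) / 2) * hw2z
        rw [hhalf] at e1 e2
        calc |R a b - R' a b|
            = |(R a ((a + b) / 2) - R' a ((a + b) / 2))
              + (R ((a + b) / 2) b - R' ((a + b) / 2) b)| := by rw [← hDadd]
          _ ≤ |R a ((a + b) / 2) - R' a ((a + b) / 2)|
              + |R ((a + b) / 2) b - R' ((a + b) / 2) b| := abs_add_le _ _
          _ ≤ (K1 + K2) * w ^ k * (|b - a| ^ z * (w / 2))
              + (K1 + K2) * w ^ k * (|b - a| ^ z * (w / 2)) := add_le_add e1 e2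
          _ = (K1 + K2) * w ^ (k + 1) * |b - a| ^ z := by rw [pow_succ]; ring
    have hlim : Filter.Tendsto (fun k : ℕ => (K1 + K2) * w ^ k * |t - s| ^ z)
        Filter.atTop (nhds 0) := by
      have := ((tendsto_pow_atTop_nhds_zero_of_lt_one hw0.le hw1).const_mul
        (K1 + K2)).mul_const (|t - s| ^ z)
      simpa using this
    have hle : |R s t - R' s t| ≤ 0 :=
      ge_of_tendsto hlim (Filter.Eventually.of_forall fun k => key k s t)
    have := abs_nonneg (R s t - R' s t)
    have h0 : |R s t - R' s t| = 0 := le_antisymm hle this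
    have := abs_eq_zero.1 h0
    linarith
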